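/- Let d ≥ 2 be an integer, let η > 0 and λ ≥ 0, and let ℛ be an admissible map with ν^ℛ((0,∞)) ≤ λ. Then, with C = ∫_0^∞ min(λ, s^{−(d+η)})^{1/d} ds (a finite constant depending only on d, λ, η), one has ∫_0^∞ ν^ℛ([r,∞))^{1/d} dr ≤ C (∫_{(0,∞)} ℛ(u)^{d+η} du)^{1/(d+η)}. -/

import Mathlib

open MeasureTheory Set
open scoped ENNReal

/-- Let d ≥ 2, η > 0, λ ≥ 0, and let ℛ be an admissible map (measurable,
nonnegative, vanishing outside a set of finite Lebesgue measure) with ν^ℛ((0,∞)) ≤ λ.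
Then, with C = ∫_0^∞ min(λ, s^{−(d+η)})^{1/d} ds (a finite constant), one has
∫_0^∞ ν^ℛ([r,∞))^{1/d} dr ≤ C (∫_{(0,∞)} ℛ(u)^{d+η} du)^{1/(d+η)}.  Here
ν^ℛ([r,∞)) = Leb{u > 0 : ℛ(u) ≥ r}. -/
lemma subst_lemma (m : ℝ) (hm : 0 < m) (f : ℝ → ℝ≥0∞) (hf : Measurable f) :
    ∫⁻ r in Ioi (0:ℝ), f r = ENNReal.ofReal m * ∫⁻ s in Ioi (0:ℝ), f (m * s) := by
  have hφ : Measurable fun s : ℝ => m * s := measurable_const_mul m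
  have hpre : (fun s : ℝ => m * s) ⁻¹' Ioi 0 = Ioi 0 := by
    ext x; simp [mul_pos_iff, hm, hm.not_gt, not_lt_of_gt hm]
  have hmap : Measure.map (fun s : ℝ => m * s) volume
      = ENNReal.ofReal |m⁻¹| • volume := Real.map_volume_mul_left hm.ne'
  have h1 : ∫⁻ s in Ioi (0:ℝ), f (m * s) ∂volume
      = ∫⁻ r in Ioi (0:ℝ), f r ∂(Measure.map (fun s : ℝ => m * s) volume) := by
    rw [setLIntegral_map measurableSet_Ioi hf hφ, hpre]
  rw [h1, hmap]
  simp only [Measure.restrict_smul, lintegral_smul_measure, smul_eq_mul]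
  rw [← mul_assoc, ← ENNReal.ofReal_mul hm.le, abs_of_pos (inv_pos.2 hm),
    mul_inv_cancel₀ hm.ne', ENNReal.ofReal_one, one_mul]

lemma C_lt_top (d : ℕ) (hd : 2 ≤ d) (η lam : ℝ) (hη : 0 < η) :
    (∫⁻ s in Ioi (0:ℝ),
        (min (ENNReal.ofReal lam) (ENNReal.ofReal s ^ (-((d:ℝ) + η)))) ^ (1 / (d:ℝ))) < ⊤ := by
  have hd0 : (0:ℝ) < d := by positivity
  rw [← Ioc_union_Ioi_eq_Ioi (zero_le_one : (0:ℝ) ≤ 1),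
    lintegral_union measurableSet_Ioi (Ioc_disjoint_Ioi le_rfl)]
  apply ENNReal.add_lt_top.2
  constructor
  · calc ∫⁻ s in Ioc (0:ℝ) 1,
        (min (ENNReal.ofReal lam) (ENNReal.ofReal s ^ (-((d:ℝ) + η)))) ^ (1 / (d:ℝ))
        ≤ ∫⁻ _ in Ioc (0:ℝ) 1, (ENNReal.ofReal lam) ^ (1 / (d:ℝ)) := by
          apply setLIntegral_mono' measurableSet_Ioc
          intro s _
          exact ENNReal.rpow_le_rpow (min_le_left _ _) (by positivity)
      _ = (ENNReal.ofReal lam) ^ (1 / (d:ℝ)) * volume (Ioc (0:ℝ) 1) := setLIntegral_const _ _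
      _ < ⊤ := ENNReal.mul_lt_top
          (ENNReal.rpow_lt_top_of_nonneg (by positivity) ENNReal.ofReal_ne_top)
          (by simp)
  · calc ∫⁻ s in Ioi (1:ℝ),
        (min (ENNReal.ofReal lam) (ENNReal.ofReal s ^ (-((d:ℝ) + η)))) ^ (1 / (d:ℝ))
        ≤ ∫⁻ s in Ioi (1:ℝ), ENNReal.ofReal (s ^ (-((d:ℝ) + η) * (1 / (d:ℝ)))) := by
          apply setLIntegral_mono' measurableSet_Ioi
          intro s hs
          have hs0 : (0:ℝ) < s := lt_trans zero_lt_one hs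
          rw [← ENNReal.ofReal_rpow_of_pos hs0, ENNReal.rpow_mul]
          exact ENNReal.rpow_le_rpow (min_le_right _ _) (by positivity)
      _ < ⊤ := by
          apply Integrable.lintegral_lt_top
          apply integrableOn_Ioi_rpow_of_lt _ zero_lt_one
          rw [neg_mul, neg_lt_neg_iff, mul_one_div, lt_div_iff₀ hd0, one_mul]
          linarith

theorem stmt9 (d : ℕ) (hd : 2 ≤ d) (η lam : ℝ) (hη : 0 < η) (hlam : 0 ≤ lam)
    (R : ℝ → ℝ) (hmeas : Measurable R) (hnonneg : ∀ u, 0 ≤ R u)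
    (hvanish : volume {u : ℝ | u ∈ Ioi (0:ℝ) ∧ R u ≠ 0} < ⊤)
    (hmass : volume {u : ℝ | u ∈ Ioi (0:ℝ) ∧ 0 < R u} ≤ ENNReal.ofReal lam) :
    (∫⁻ s in Ioi (0:ℝ),
        (min (ENNReal.ofReal lam) (ENNReal.ofReal s ^ (-((d:ℝ) + η)))) ^ (1 / (d:ℝ))) < ⊤ ∧
    (∫⁻ r in Ioi (0:ℝ), (volume {u : ℝ | u ∈ Ioi (0:ℝ) ∧ r ≤ R u}) ^ (1 / (d:ℝ))) ≤
      (∫⁻ s in Ioi (0:ℝ),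
        (min (ENNReal.ofReal lam) (ENNReal.ofReal s ^ (-((d:ℝ) + η)))) ^ (1 / (d:ℝ))) *
      (∫⁻ u in Ioi (0:ℝ), ENNReal.ofReal (R u) ^ ((d:ℝ) + η)) ^ (1 / ((d:ℝ) + η)) := by
  have hd0 : (0:ℝ) < d := by positivity
  have hp : (0:ℝ) < (d:ℝ) + η := by positivity
  have hdinv : (0:ℝ) < 1 / (d:ℝ) := by positivity
  refine ⟨C_lt_top d hd η lam hη, ?_⟩
  set p : ℝ := (d:ℝ) + η with hp_def
  set C : ℝ≥0∞ := ∫⁻ s in Ioi (0:ℝ),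
      (min (ENNReal.ofReal lam) (ENNReal.ofReal s ^ (-p))) ^ (1 / (d:ℝ)) with hC_def
  set I : ℝ≥0∞ := ∫⁻ u in Ioi (0:ℝ), ENNReal.ofReal (R u) ^ p with hI_def
  -- common reduction: if all the measures vanish, LHS = 0
  have key0 : (∀ r ∈ Ioi (0:ℝ), volume {u : ℝ | u ∈ Ioi (0:ℝ) ∧ r ≤ R u} = 0) →
      (∫⁻ r in Ioi (0:ℝ), (volume {u : ℝ | u ∈ Ioi (0:ℝ) ∧ r ≤ R u}) ^ (1 / (d:ℝ)))
        ≤ C * I ^ (1 / p) := by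
    intro h
    have heq : ∫⁻ r in Ioi (0:ℝ), (volume {u : ℝ | u ∈ Ioi (0:ℝ) ∧ r ≤ R u}) ^ (1 / (d:ℝ))
        = ∫⁻ _ in Ioi (0:ℝ), (0:ℝ≥0∞) := by
      apply setLIntegral_congr_fun measurableSet_Ioi
      intro r hr
      simp only
      rw [h r hr, ENNReal.zero_rpow_of_pos hdinv]
    rw [heq]
    simp
  -- case lam = 0
  by_cases hl : ENNReal.ofReal lam = 0
  · apply key0
    intro r hr
    refine le_antisymm (le_trans (measure_mono ?_) (hl ▸ hmass)) zero_le
    exact fun u hu => ⟨hu.1, lt_of_lt_of_le hr hu.2⟩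
  -- case I = 0
  by_cases hI0 : I = 0
  · apply key0
    intro r hr
    have hmeas' : Measurable fun u : ℝ => ENNReal.ofReal (R u) ^ p := by fun_prop
    rw [hI_def, lintegral_eq_zero_iff hmeas'] at hI0
    have hnull : volume.restrict (Ioi (0:ℝ))
        {u : ℝ | ¬ (ENNReal.ofReal (R u) ^ p = 0)} = 0 := by
      simpa using ae_iff.1 hI0
    have hr0 : (0:ℝ) < r := hr
    have hsub : {u : ℝ | u ∈ Ioi (0:ℝ) ∧ r ≤ R u}
        ⊆ {u : ℝ | ¬ (ENNReal.ofReal (R u) ^ p = 0)} ∩ Ioi (0:ℝ) := by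
      intro u hu
      refine ⟨?_, hu.1⟩
      have hRu : 0 < R u := lt_of_lt_of_le hr0 hu.2
      simp only [mem_setOf_eq, ENNReal.rpow_eq_zero_iff, not_or, not_and, not_lt]
      exact ⟨fun h0 => absurd h0 (ENNReal.ofReal_pos.2 hRu).ne',
        fun htop => absurd htop ENNReal.ofReal_ne_top⟩
    have hms : MeasurableSet {u : ℝ | ¬ (ENNReal.ofReal (R u) ^ p = 0)} :=
      (hmeas' (measurableSet_singleton 0)).compl
    refine measure_mono_null hsub ?_
    rw [Measure.restrict_apply hms] at hnull
    exact hnull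
  -- now lam > 0 and I ≠ 0
  by_cases hItop : I = ⊤
  · -- RHS is ⊤ since C > 0
    have hfm : Measurable fun s : ℝ =>
        (min (ENNReal.ofReal lam) (ENNReal.ofReal s ^ (-p))) ^ (1 / (d:ℝ)) := by fun_prop
    have hCpos : C ≠ 0 := by
      rw [hC_def]
      apply ne_of_gt
      rw [lintegral_pos_iff_support hfm]
      have hsub : Ioi (0:ℝ) ⊆ Function.support fun s : ℝ =>
          (min (ENNReal.ofReal lam) (ENNReal.ofReal s ^ (-p))) ^ (1 / (d:ℝ)) := by
        intro s hs
        have hs0 : (0:ℝ) < s := hs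
        have h1 : ENNReal.ofReal s ^ (-p) ≠ 0 := by
          simp [ENNReal.rpow_eq_zero_iff, (ENNReal.ofReal_pos.2 hs0).ne',
            ENNReal.ofReal_ne_top]
        have h2 : min (ENNReal.ofReal lam) (ENNReal.ofReal s ^ (-p)) ≠ 0 :=
          (lt_min (pos_iff_ne_zero.2 hl) (pos_iff_ne_zero.2 h1)).ne'
        simp only [Function.mem_support, ne_eq, ENNReal.rpow_eq_zero_iff, not_or, not_and,
          not_lt]
        exact ⟨fun h0 => absurd h0 h2, fun _ => hdinv.le⟩
      refine lt_of_lt_of_le ?_ (measure_mono hsub)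
      rw [Measure.restrict_apply_self]
      simp [Real.volume_Ioi]
    rw [hItop, ENNReal.top_rpow_of_pos (by positivity), ENNReal.mul_top hCpos]
    exact le_top
  -- main case: 0 < I < ⊤
  have hIp0 : I ^ (1 / p) ≠ 0 := by
    simp [ENNReal.rpow_eq_zero_iff, hI0, hItop]
  have hIptop : I ^ (1 / p) ≠ ⊤ := by
    simp [ENNReal.rpow_eq_top_iff, hI0, hItop]
  set m : ℝ := (I ^ (1 / p)).toReal with hm_def
  have hm0 : 0 < m := ENNReal.toReal_pos hIp0 hIptop
  have hM : ENNReal.ofReal m = I ^ (1 / p) := ENNReal.ofReal_toReal hIptop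
  -- pointwise Chebyshev + mass bound
  have hbound : ∀ r ∈ Ioi (0:ℝ), volume {u : ℝ | u ∈ Ioi (0:ℝ) ∧ r ≤ R u}
      ≤ min (ENNReal.ofReal lam) (ENNReal.ofReal r ^ (-p) * I) := by
    intro r hr
    have hr0 : (0:ℝ) < r := hr
    refine le_min ?_ ?_
    · have hsub : {u : ℝ | u ∈ Ioi (0:ℝ) ∧ r ≤ R u} ⊆ {u : ℝ | u ∈ Ioi (0:ℝ) ∧ 0 < R u} :=
        fun u hu => ⟨hu.1, lt_of_lt_of_le hr0 hu.2⟩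
      exact le_trans (measure_mono hsub) hmass
    · have hfm2 : AEMeasurable (fun u : ℝ => ENNReal.ofReal (R u) ^ p)
          (volume.restrict (Ioi (0:ℝ))) := by fun_prop
      have hcheb := mul_meas_ge_le_lintegral₀ hfm2 (ENNReal.ofReal r ^ p)
      have hseteq : {x : ℝ | ENNReal.ofReal r ^ p ≤ ENNReal.ofReal (R x) ^ p}
          = {x : ℝ | r ≤ R x} := by
        ext x
        rw [mem_setOf_eq, mem_setOf_eq, ENNReal.rpow_le_rpow_iff hp,
          ENNReal.ofReal_le_ofReal_iff (hnonneg x)]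
      have hν : volume {u : ℝ | u ∈ Ioi (0:ℝ) ∧ r ≤ R u}
          = volume.restrict (Ioi (0:ℝ)) {x : ℝ | r ≤ R x} := by
        rw [Measure.restrict_apply (measurableSet_le measurable_const hmeas)]
        congr 1
        ext u
        simp [mem_setOf_eq, and_comm]
      rw [hseteq] at hcheb
      have ha0 : ENNReal.ofReal r ^ p ≠ 0 :=
        (ENNReal.rpow_pos (ENNReal.ofReal_pos.2 hr0) ENNReal.ofReal_ne_top).ne'
      have hatop : ENNReal.ofReal r ^ p ≠ ⊤ :=
        ENNReal.rpow_ne_top_of_nonneg hp.le ENNReal.ofReal_ne_top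
      calc volume {u : ℝ | u ∈ Ioi (0:ℝ) ∧ r ≤ R u}
          = ((ENNReal.ofReal r ^ p)⁻¹ * (ENNReal.ofReal r ^ p)) *
            volume.restrict (Ioi (0:ℝ)) {x : ℝ | r ≤ R x} := by
            rw [ENNReal.inv_mul_cancel ha0 hatop, one_mul, hν]
        _ = (ENNReal.ofReal r ^ p)⁻¹ *
            ((ENNReal.ofReal r ^ p) * volume.restrict (Ioi (0:ℝ)) {x : ℝ | r ≤ R x}) :=
            mul_assoc _ _ _
        _ ≤ (ENNReal.ofReal r ^ p)⁻¹ * I := mul_le_mul_right hcheb _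
        _ = ENNReal.ofReal r ^ (-p) * I := by rw [ENNReal.rpow_neg]
  -- the substitution computation
  have hsubeq : ∀ s ∈ Ioi (0:ℝ),
      (min (ENNReal.ofReal lam) (ENNReal.ofReal (m * s) ^ (-p) * I)) ^ (1 / (d:ℝ))
      = (min (ENNReal.ofReal lam) (ENNReal.ofReal s ^ (-p))) ^ (1 / (d:ℝ)) := by
    intro s hs
    have hs0 : (0:ℝ) < s := hs
    congr 1
    have h1 : ENNReal.ofReal (m * s) = ENNReal.ofReal m * ENNReal.ofReal s :=
      ENNReal.ofReal_mul hm0.le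
    have h2 : (ENNReal.ofReal m * ENNReal.ofReal s) ^ (-p)
        = ENNReal.ofReal m ^ (-p) * ENNReal.ofReal s ^ (-p) :=
      ENNReal.mul_rpow_of_ne_zero (ENNReal.ofReal_pos.2 hm0).ne'
        (ENNReal.ofReal_pos.2 hs0).ne' _
    have h3 : ENNReal.ofReal m ^ (-p) * I = 1 := by
      rw [hM, ← ENNReal.rpow_mul, show (1/p) * (-p) = -1 by field_simp,
        ENNReal.rpow_neg_one, ENNReal.inv_mul_cancel hI0 hItop]
    rw [h1, h2, mul_right_comm, h3, one_mul]
  calc ∫⁻ r in Ioi (0:ℝ), volume {u : ℝ | u ∈ Ioi (0:ℝ) ∧ r ≤ R u} ^ (1 / (d:ℝ))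
      ≤ ∫⁻ r in Ioi (0:ℝ),
          (min (ENNReal.ofReal lam) (ENNReal.ofReal r ^ (-p) * I)) ^ (1 / (d:ℝ)) :=
        setLIntegral_mono' measurableSet_Ioi fun r hr =>
          ENNReal.rpow_le_rpow (hbound r hr) hdinv.le
    _ = ENNReal.ofReal m * ∫⁻ s in Ioi (0:ℝ),
          (min (ENNReal.ofReal lam) (ENNReal.ofReal (m * s) ^ (-p) * I)) ^ (1 / (d:ℝ)) :=
        subst_lemma m hm0 _ (by fun_prop)
    _ = ENNReal.ofReal m * C := by
        congr 1
        rw [hC_def]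
        apply setLIntegral_congr_fun measurableSet_Ioi
        intro s hs
        exact hsubeq s hs
    _ = C * I ^ (1 / p) := by rw [hM, mul_comm]
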